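/- Every update procedure of ordinal ω has a finite zero: if U is a map sending each sequence f : ℕ → (ℕ → ℕ) of functions to an element of (ℕ × ℕ × ℕ) ∪ {∅}, U is continuous, and U satisfies the update condition with index set ℕ in its usual order, then there exists f with {(i,n) : f_i n ≠ 0} finite and U f = ∅ (Zero Theorem for update procedures of ordinal ω). -/
import Mathlib

section ZeroTheoremAux

open Classical

variable (U : (ℕ → ℕ → ℕ) → Option (ℕ × ℕ × ℕ))

/-- A state for the Zorn argument: a sequence `x`, a family `s` of "touched"
positions at each level, each touched position carrying a witness sequence
with the same prefix whose update prescribed the current value. -/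
structure UPState where
  x : ℕ → ℕ → ℕ
  s : ℕ → Set ℕ
  zero_off : ∀ i n, n ∉ s i → x i n = 0
  wit : ∀ i n, n ∈ s i → ∃ r : ℕ → ℕ → ℕ,
    (∀ j < i, r j = x j) ∧ U r = some (i, n, x i n)

namespace UPState

variable {U}

def Agree (a b : UPState U) (i : ℕ) : Prop :=
  ∀ j < i, a.s j = b.s j ∧ a.x j = b.x j

lemma agree_mono {a b : UPState U} {i i' : ℕ} (h : i' ≤ i) (hag : a.Agree b i) :
    a.Agree b i' := fun j hj => hag j (lt_of_lt_of_le hj h)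

lemma agree_symm {a b : UPState U} {i : ℕ} (hag : a.Agree b i) : b.Agree a i :=
  fun j hj => ⟨(hag j hj).1.symm, (hag j hj).2.symm⟩

protected def le (a b : UPState U) : Prop :=
  ∀ i, a.Agree b i → a.s i ⊆ b.s i ∧ ∀ n ∈ a.s i, a.x i n = b.x i n

protected lemma le_refl (a : UPState U) : a.le a :=
  fun _ _ => ⟨subset_rfl, fun _ _ => rfl⟩

protected lemma le_trans {a b c : UPState U} (hab : a.le b) (hbc : b.le c) :
    a.le c := by
  have key : ∀ j, a.Agree c (j + 1) →
      (a.s j = b.s j ∧ a.x j = b.x j) ∧ (b.s j = c.s j ∧ b.x j = c.x j) := by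
    intro j
    induction j using Nat.strong_induction_on with
    | _ j ih =>
      intro hac
      have hab' : a.Agree b j := fun j' hj' =>
        (ih j' hj' (agree_mono (by omega) hac)).1
      have hbc' : b.Agree c j := fun j' hj' =>
        (ih j' hj' (agree_mono (by omega) hac)).2
      have h1 := hab j hab'
      have h2 := hbc j hbc'
      have hacj := hac j (by omega)
      have hsb : a.s j = b.s j := by
        refine subset_antisymm h1.1 ?_
        rw [hacj.1]; exact h2.1
      have hxb : a.x j = b.x j := by
        funext n
        by_cases hn : n ∈ a.s j
        · exact h1.2 n hn
        · rw [a.zero_off j n hn, b.zero_off j n (by rw [← hsb]; exact hn)]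
      refine ⟨⟨hsb, hxb⟩, ⟨?_, ?_⟩⟩
      · rw [← hsb]; exact hacj.1
      · rw [← hxb]; exact hacj.2
  intro i hac
  have hab' : a.Agree b i := fun j hj => (key j (agree_mono (by omega) hac)).1
  have hbc' : b.Agree c i := fun j hj => (key j (agree_mono (by omega) hac)).2
  obtain ⟨hs1, hx1⟩ := hab i hab'
  obtain ⟨hs2, hx2⟩ := hbc i hbc'
  exact ⟨hs1.trans hs2, fun n hn => (hx1 n hn).trans (hx2 n (hs1 hn))⟩

instance : Preorder (UPState U) where
  le := UPState.le
  le_refl := UPState.le_refl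
  le_trans := fun _ _ _ => UPState.le_trans

lemma le_def {a b : UPState U} : a ≤ b ↔ a.le b := Iff.rfl

/-- The decreasing family of chain elements having the maximal data at
levels below `i`. -/
def Dset (C : Set (UPState U)) : ℕ → Set (UPState U)
  | 0 => C
  | (i + 1) => {c | c ∈ Dset C i ∧ c.s i = ⋃ c' ∈ Dset C i, c'.s i}

lemma Dset_le {C : Set (UPState U)} : ∀ {i j : ℕ}, j ≤ i → Dset C i ⊆ Dset C j := by
  intro i
  induction i with
  | zero => intro j h; obtain rfl := Nat.le_zero.mp h; exact subset_rfl
  | succ i ih =>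
    intro j h
    rcases eq_or_lt_of_le h with rfl | h'
    · exact subset_rfl
    · exact fun c hc => ih (Nat.lt_succ_iff.mp h') hc.1

lemma Dset_subset_C {C : Set (UPState U)} {i : ℕ} : Dset C i ⊆ C :=
  Dset_le (Nat.zero_le i)

lemma D_agree {C : Set (UPState U)} (hC : IsChain (· ≤ ·) C) :
    ∀ i, ∀ c ∈ Dset C i, ∀ c' ∈ Dset C i, Agree c c' i := by
  intro i
  induction i with
  | zero => intro c _ c' _ j hj; omega
  | succ i ih =>
    intro c hc c' hc' j hj
    rcases Nat.lt_succ_iff_lt_or_eq.mp hj with hj' | rfl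
    · exact ih c hc.1 c' hc'.1 j hj'
    · have hs : c.s j = c'.s j := by rw [hc.2, hc'.2]
      refine ⟨hs, ?_⟩
      have hagi : Agree c c' j := ih c hc.1 c' hc'.1
      rcases eq_or_ne c c' with rfl | hne
      · rfl
      rcases hC (Dset_subset_C hc.1) (Dset_subset_C hc'.1) hne with hle | hle
      · funext n
        by_cases hn : n ∈ c.s j
        · exact (hle j hagi).2 n hn
        · rw [c.zero_off j n hn, c'.zero_off j n (by rw [← hs]; exact hn)]
      · funext n
        by_cases hn : n ∈ c'.s j
        · exact ((hle j (agree_symm hagi)).2 n hn).symm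
        · rw [c.zero_off j n (by rw [hs]; exact hn), c'.zero_off j n hn]

lemma D_x_eq {C : Set (UPState U)} (hC : IsChain (· ≤ ·) C) {i : ℕ}
    {c c' : UPState U} (hc : c ∈ Dset C i) (hc' : c' ∈ Dset C i) {n : ℕ}
    (hn : n ∈ c.s i) (hn' : n ∈ c'.s i) : c.x i n = c'.x i n := by
  rcases eq_or_ne c c' with rfl | hne
  · rfl
  rcases hC (Dset_subset_C hc) (Dset_subset_C hc') hne with hle | hle
  · exact (hle i (D_agree hC i c hc c' hc')).2 n hn
  · exact ((hle i (D_agree hC i c' hc' c hc)).2 n hn').symm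

/-- Union of touched sets over the maximal part of a chain. -/
def SS (C : Set (UPState U)) (i : ℕ) : Set ℕ := ⋃ c ∈ Dset C i, c.s i

/-- Glued values over the maximal part of a chain. -/
noncomputable def XX (C : Set (UPState U)) (i n : ℕ) : ℕ :=
  if h : ∃ c ∈ Dset C i, n ∈ c.s i then h.choose.x i n else 0

lemma XX_eq {C : Set (UPState U)} (hC : IsChain (· ≤ ·) C) {i : ℕ}
    {c : UPState U} (hc : c ∈ Dset C i) {n : ℕ} (hn : n ∈ c.s i) :
    XX C i n = c.x i n := by
  have h : ∃ c' ∈ Dset C i, n ∈ c'.s i := ⟨c, hc, hn⟩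
  rw [XX, dif_pos h]
  exact D_x_eq hC h.choose_spec.1 hc h.choose_spec.2 hn

lemma XX_zero {C : Set (UPState U)} {i n : ℕ} (h : n ∉ SS C i) : XX C i n = 0 := by
  rw [XX, dif_neg]
  rintro ⟨c, hc, hn⟩
  exact h (Set.mem_biUnion hc hn)

lemma D_level_lt {C : Set (UPState U)} (hC : IsChain (· ≤ ·) C) {i j : ℕ}
    {c : UPState U} (hc : c ∈ Dset C i) (hj : j < i) :
    c.s j = SS C j ∧ c.x j = XX C j := by
  have hcj : c ∈ Dset C (j + 1) := Dset_le (by omega) hc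
  refine ⟨hcj.2, ?_⟩
  funext n
  by_cases hn : n ∈ c.s j
  · exact (XX_eq hC hcj.1 hn).symm
  · rw [c.zero_off j n hn, XX_zero]
    show n ∉ SS C j
    rw [show SS C j = c.s j from hcj.2.symm]
    exact hn

lemma chain_bdd {C : Set (UPState U)} (hC : IsChain (· ≤ ·) C) : BddAbove C := by
  have hz : ∀ i n, n ∉ SS C i → XX C i n = 0 := fun i n hn => XX_zero hn
  have hw : ∀ i n, n ∈ SS C i → ∃ r : ℕ → ℕ → ℕ,
      (∀ j < i, r j = XX C j) ∧ U r = some (i, n, XX C i n) := by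
    intro i n hn
    rcases Set.mem_iUnion₂.mp hn with ⟨c, hc, hnc⟩
    obtain ⟨r, hr, hUr⟩ := c.wit i n hnc
    refine ⟨r, fun j hj => ?_, ?_⟩
    · rw [hr j hj, (D_level_lt hC hc hj).2]
    · rw [XX_eq hC hc hnc]; exact hUr
  refine ⟨⟨XX C, SS C, hz, hw⟩, fun c hcC => ?_⟩
  set b : UPState U := ⟨XX C, SS C, hz, hw⟩ with hb
  have hmem : ∀ i', Agree c b i' → c ∈ Dset C i' := by
    intro i'
    induction i' with
    | zero => exact fun _ => hcC
    | succ i' ih =>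
      intro hag'
      exact ⟨ih (agree_mono (Nat.le_succ i') hag'),
        (hag' i' (Nat.lt_succ_self i')).1⟩
  intro i hag
  have hci := hmem i hag
  constructor
  · exact Set.subset_biUnion_of_mem (u := fun c' => c'.s i) hci
  · intro n hn
    exact (XX_eq hC hci hn).symm

/-- Data part of the one-step extension of a state. -/
noncomputable def upX (m : UPState U) (i n v : ℕ) : ℕ → ℕ → ℕ := fun j =>
  if j < i then m.x j else if j = i then Function.update (m.x i) n v else fun _ => 0

def upS (m : UPState U) (i n : ℕ) : ℕ → Set ℕ := fun j =>
  if j < i then m.s j else if j = i then insert n (m.s i) else ∅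

lemma upX_lt {m : UPState U} {i n v j : ℕ} (h : j < i) : upX m i n v j = m.x j :=
  if_pos h

lemma upX_self {m : UPState U} {i n v : ℕ} :
    upX m i n v i = Function.update (m.x i) n v := by
  simp [upX]

lemma upX_gt {m : UPState U} {i n v j : ℕ} (h : i < j) :
    upX m i n v j = fun _ => 0 := by
  have h1 : ¬ j < i := by omega
  have h2 : j ≠ i := by omega
  simp [upX, h1, h2]

lemma upS_lt {m : UPState U} {i n j : ℕ} (h : j < i) : upS m i n j = m.s j :=
  if_pos h

lemma upS_self {m : UPState U} {i n : ℕ} : upS m i n i = insert n (m.s i) := by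
  simp [upS]

lemma upS_gt {m : UPState U} {i n j : ℕ} (h : i < j) : upS m i n j = ∅ := by
  have h1 : ¬ j < i := by omega
  have h2 : j ≠ i := by omega
  simp [upS, h1, h2]

end UPState

end ZeroTheoremAux

/-- Zero Theorem for update procedures of ordinal ω: every continuous map
`U` on ℕ-indexed sequences of functions satisfying the update condition
(with index set ℕ in its usual order) has a finite zero. -/
theorem zero_theorem_omega_update_procedure
    (U : (ℕ → ℕ → ℕ) → Option (ℕ × ℕ × ℕ))
    -- continuity
    (hcont : ∀ f : ℕ → ℕ → ℕ, ∃ A : Finset (ℕ × ℕ),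
      ∀ g : ℕ → ℕ → ℕ, (∀ p ∈ A, g p.1 p.2 = f p.1 p.2) → U g = U f)
    -- update condition
    (hupd : ∀ (f g : ℕ → ℕ → ℕ) (i n m h l : ℕ),
      (∀ j, j < i → f j = g j) →
      U f = some (i, n, m) → g i n = m → U g = some (i, h, l) → h ≠ n) :
    ∃ f : ℕ → ℕ → ℕ, Set.Finite {p : ℕ × ℕ | f p.1 p.2 ≠ 0} ∧ U f = none := by
  classical
  obtain ⟨m, hm⟩ := zorn_le (α := UPState U)
    (fun C hC => UPState.chain_bdd hC)
  -- The maximal state is a (possibly infinite) zero of U.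
  have hnone : U m.x = none := by
    rcases hU : U m.x with _ | ⟨i, n, v⟩
    · rfl
    exfalso
    -- n has not been touched at level i
    have hns : n ∉ m.s i := by
      intro hn
      obtain ⟨r, hr, hUr⟩ := m.wit i n hn
      exact hupd r m.x i n (m.x i n) n v hr hUr rfl hU rfl
    -- build the extended state
    have hz : ∀ j k, k ∉ UPState.upS m i n j → UPState.upX m i n v j k = 0 := by
      intro j k hk
      rcases lt_trichotomy j i with h1 | heq | h1
      · rw [UPState.upX_lt h1]
        rw [UPState.upS_lt h1] at hk
        exact m.zero_off j k hk
      · subst heq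
        rw [UPState.upX_self]
        rw [UPState.upS_self] at hk
        have hkn : k ≠ n := fun e => hk (by rw [e]; exact Set.mem_insert n _)
        rw [Function.update_of_ne hkn]
        exact m.zero_off j k fun hh => hk (Set.mem_insert_of_mem _ hh)
      · rw [UPState.upX_gt h1]
    have hw : ∀ j k, k ∈ UPState.upS m i n j → ∃ r : ℕ → ℕ → ℕ,
        (∀ j' < j, r j' = UPState.upX m i n v j') ∧
        U r = some (j, k, UPState.upX m i n v j k) := by
      intro j k hk
      rcases lt_trichotomy j i with h1 | heq | h1
      · rw [UPState.upS_lt h1] at hk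
        obtain ⟨r, hr, hUr⟩ := m.wit j k hk
        refine ⟨r, fun j' hj' => ?_, ?_⟩
        · rw [UPState.upX_lt (lt_trans hj' h1)]; exact hr j' hj'
        · rw [UPState.upX_lt h1]; exact hUr
      · subst heq
        rw [UPState.upS_self] at hk
        rcases Set.mem_insert_iff.mp hk with rfl | hk'
        · refine ⟨m.x, fun j' hj' => (UPState.upX_lt hj').symm, ?_⟩
          rw [UPState.upX_self, Function.update_self]
          exact hU
        · obtain ⟨r, hr, hUr⟩ := m.wit j k hk'
          have hkn : k ≠ n := fun e => hns (e ▸ hk')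
          refine ⟨r, fun j' hj' => ?_, ?_⟩
          · rw [UPState.upX_lt hj']; exact hr j' hj'
          · rw [UPState.upX_self, Function.update_of_ne hkn]; exact hUr
      · rw [UPState.upS_gt h1] at hk
        exact hk.elim
    set mm : UPState U := ⟨UPState.upX m i n v, UPState.upS m i n, hz, hw⟩ with hmm
    have hle : m ≤ mm := by
      intro j hag
      rcases lt_trichotomy j i with h1 | heq | h1
      · constructor
        · intro k hk
          show k ∈ UPState.upS m i n j
          rw [UPState.upS_lt h1]; exact hk
        · intro k hk
          show m.x j k = UPState.upX m i n v j k
          rw [UPState.upX_lt h1]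
      · subst heq
        constructor
        · intro k hk
          show k ∈ UPState.upS m j n j
          rw [UPState.upS_self]
          exact Set.mem_insert_of_mem _ hk
        · intro k hk
          show m.x j k = UPState.upX m j n v j k
          have hkn : k ≠ n := fun e => hns (e ▸ hk)
          rw [UPState.upX_self, Function.update_of_ne hkn]
      · exfalso
        have hsi := (hag i h1).1
        have : n ∈ m.s i := by
          rw [hsi]
          show n ∈ UPState.upS m i n i
          rw [UPState.upS_self]
          exact Set.mem_insert n _
        exact hns this
    have hge := hm hle
    have hag : mm.Agree m i := by
      intro j hj
      constructor
      · show UPState.upS m i n j = m.s j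
        rw [UPState.upS_lt hj]
      · show UPState.upX m i n v j = m.x j
        rw [UPState.upX_lt hj]
    have hsub := (hge i hag).1
    have hni : n ∈ UPState.upS m i n i := by
      rw [UPState.upS_self]; exact Set.mem_insert n _
    exact hns (hsub hni)
  -- Use continuity to shrink to a finite zero.
  obtain ⟨A, hA⟩ := hcont m.x
  refine ⟨fun j k => if (j, k) ∈ A then m.x j k else 0, ?_, ?_⟩
  · apply Set.Finite.subset A.finite_toSet
    intro p hp
    by_contra hpA
    have : ((p.1, p.2) : ℕ × ℕ) = p := rfl
    simp only [Set.mem_setOf_eq, this] at hp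
    exact hp (if_neg hpA)
  · rw [hA _ ?_]
    · exact hnone
    · intro p hp
      have : ((p.1, p.2) : ℕ × ℕ) = p := rfl
      rw [this, if_pos hp]
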